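/- arXiv:1909.06517 — 10 statements merged into one kernel-verified Lean document; each statement's English description precedes it below -/
import Mathlib

section
/- Let s ≥ 2 be an integer. If n > β·g_{s−1}·g_{s−2}, then there exist positive integers a, b with n = a·g_{s−1} + β·b·g_{s−2}; equivalently, there is an (α,β)-walk w with w_s = n (so s(n) ≥ s). -/
lemma exists_rep (x y n : ℕ) (hx : 1 ≤ x) (hy : 1 ≤ y)
    (hco : Nat.Coprime x y) (hn : x * y < n) :
    ∃ a b : ℕ, 1 ≤ a ∧ 1 ≤ b ∧ n = a * x + b * y := by
  haveI : NeZero y := ⟨by omega⟩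
  set u : (ZMod y)ˣ := ZMod.unitOfCoprime x hco with hu
  set a0 : ℕ := ((u⁻¹ : (ZMod y)ˣ) * (n : ZMod y)).val with ha0
  have ha0lt : a0 < y := ZMod.val_lt _
  have hmod : (↑(a0 * x) : ZMod y) = (n : ZMod y) := by
    push_cast
    rw [ha0, ZMod.natCast_val, ZMod.cast_id]
    have : ((u : ZMod y)) = (x : ZMod y) := rfl
    rw [mul_comm, ← this, ← mul_assoc, Units.mul_inv, one_mul]
  set a : ℕ := if a0 = 0 then y else a0 with ha
  have ha1 : 1 ≤ a := by by_cases h : a0 = 0 <;> simp [ha, h] <;> omega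
  have haley : a ≤ y := by by_cases h : a0 = 0 <;> simp [ha, h] <;> omega
  have hmoda : (↑(a * x) : ZMod y) = (n : ZMod y) := by
    by_cases h : a0 = 0
    · simp only [ha, h, if_pos]
      rw [← hmod, h]
      push_cast
      simp
    · simpa [ha, h] using hmod
  have hmn : a * x ≡ n [MOD y] := (ZMod.natCast_eq_natCast_iff _ _ _).mp hmoda
  have hle : a * x ≤ n := le_trans (by nlinarith) (le_of_lt hn)
  have hdvd : y ∣ n - a * x := (Nat.modEq_iff_dvd' hle).mp hmn
  obtain ⟨b, hb⟩ := hdvd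
  have hbpos : 1 ≤ b := by
    rcases Nat.eq_zero_or_pos b with h0 | h
    · exfalso
      rw [h0, mul_zero] at hb
      have : a * x ≤ x * y := by nlinarith
      omega
    · exact h
  exact ⟨a, b, ha1, hbpos, by rw [mul_comm b y]; omega⟩

theorem stmt_7 (α β : ℕ) (hα : 1 ≤ α) (hβ : 1 ≤ β) (hco : Nat.Coprime α β)
    (g : ℕ → ℕ) (hg0 : g 0 = 0) (hg1 : g 1 = 1)
    (hgrec : ∀ k, g (k + 2) = α * g (k + 1) + β * g k)
    (s n : ℕ) (hs : 2 ≤ s) (hn : n > β * g (s - 1) * g (s - 2)) :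
    ∃ a b : ℕ, 1 ≤ a ∧ 1 ≤ b ∧ n = a * g (s - 1) + β * b * g (s - 2) := by
  -- positivity of g (m+1)
  have hpos : ∀ m, 1 ≤ g (m + 1) := by
    intro m
    induction m using Nat.strong_induction_on with
    | _ m ih =>
      match m with
      | 0 => simpa [hg1] using le_refl 1
      | (k+1) =>
        have := ih k (by omega)
        rw [hgrec k]
        nlinarith
  -- coprimality of g (m+1) with β * g m
  have hcop : ∀ m, Nat.Coprime (g (m + 1)) (β * g m) := by
    intro m
    induction m with
    | zero => simp [hg1]
    | succ k ih =>
      have hgb : Nat.Coprime (g (k + 1)) β :=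
        Nat.Coprime.coprime_dvd_right ⟨g k, rfl⟩ ih
      have h1 : Nat.Coprime (g (k + 2)) β := by
        rw [hgrec k, show α * g (k + 1) + β * g k = α * g (k + 1) + g k * β by ring,
          Nat.coprime_add_mul_right_left]
        exact (hco.symm.mul_right hgb.symm).symm
      have h2 : Nat.Coprime (g (k + 2)) (g (k + 1)) := by
        rw [hgrec k, show α * g (k + 1) + β * g k = β * g k + g (k + 1) * α by ring,
          Nat.coprime_add_mul_left_left]
        exact ih.symm
      exact h1.mul_right h2
  obtain ⟨k, rfl⟩ : ∃ k, s = k + 2 := ⟨s - 2, by omega⟩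
  simp only [Nat.add_sub_cancel, show k + 2 - 1 = k + 1 by omega] at hn ⊢
  rcases Nat.eq_zero_or_pos k with rfl | hk
  · refine ⟨n, 1, ?_, le_refl 1, ?_⟩ <;> simp [hg0, hg1] at hn ⊢ <;> omega
  · obtain ⟨k', rfl⟩ : ∃ k', k = k' + 1 := ⟨k - 1, by omega⟩
    have hx := hpos (k' + 1)
    have hy : 1 ≤ β * g (k' + 1) := Nat.one_le_iff_ne_zero.mpr
      (Nat.mul_ne_zero (by omega) (by have := hpos k'; omega))
    obtain ⟨a, b, ha, hb, hab⟩ := exists_rep (g (k' + 2)) (β * g (k' + 1)) n hx hy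
      (hcop (k' + 1)) (by nlinarith)
    exact ⟨a, b, ha, hb, by rw [hab]; ring⟩
end

section
/- Suppose n = a·g_{s−1} + β·b·g_{s−2} with a, b ≥ 1 and s > 2, where s = s(n) is maximal (no a', b' ≥ 1 satisfy n = a'·g_s + β·b'·g_{s−1}). Then for every ℓ ≥ 0, a − α·b − ℓ·g_s is not a positive multiple of β. -/
theorem stmt_8 (α β : ℕ) (hα : 1 ≤ α) (hβ : 1 ≤ β) (hco : Nat.Coprime α β)
    (g : ℕ → ℕ) (hg0 : g 0 = 0) (hg1 : g 1 = 1)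
    (hgrec : ∀ k, g (k + 2) = α * g (k + 1) + β * g k)
    (n a b s : ℕ) (ha : 1 ≤ a) (hb : 1 ≤ b) (hs : 2 < s)
    (hrep : n = a * g (s - 1) + β * b * g (s - 2))
    (hmax : ¬ ∃ a' b' : ℕ, 1 ≤ a' ∧ 1 ≤ b' ∧ n = a' * g s + β * b' * g (s - 1)) :
    ∀ ℓ : ℕ, ¬ ∃ m : ℕ, 1 ≤ m ∧ (a : ℤ) - α * b - ℓ * g s = β * m := by
  intro ℓ
  rintro ⟨m, hm, heq⟩
  apply hmax
  refine ⟨b + ℓ * g (s - 1), m, by omega, hm, ?_⟩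
  have ha' : a = α * b + ℓ * g s + β * m := by
    have : (a : ℤ) = α * b + ℓ * g s + β * m := by linarith
    exact_mod_cast this
  have hgs : g s = α * g (s - 1) + β * g (s - 2) := by
    have h1 : s - 2 + 1 = s - 1 := by omega
    have h2 : s - 2 + 2 = s := by omega
    have := hgrec (s - 2)
    rw [h1, h2] at this
    exact this
  subst hrep
  rw [ha', hgs]
  ring
end

section
/- Let s = s(n) > 2 and let (b, a) be positive integers with n = a·g_{s−1} + β·b·g_{s−2} (an n-good pair). Then a ≤ (β−1)·g_s + α·b. -/
theorem stmt_11 (α β : ℕ) (hα : 1 ≤ α) (hβ : 1 ≤ β) (hco : Nat.Coprime α β)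
    (g : ℕ → ℕ) (hg0 : g 0 = 0) (hg1 : g 1 = 1)
    (hgrec : ∀ k, g (k + 2) = α * g (k + 1) + β * g k)
    (n a b s : ℕ) (ha : 1 ≤ a) (hb : 1 ≤ b) (hs : 2 < s)
    (hrep : n = a * g (s - 1) + β * b * g (s - 2))
    (hmax : ¬ ∃ a' b' : ℕ, 1 ≤ a' ∧ 1 ≤ b' ∧ n = a' * g s + β * b' * g (s - 1)) :
    a ≤ (β - 1) * g s + α * b := by
  obtain ⟨m, rfl⟩ : ∃ m, s = m + 3 := ⟨s - 3, by omega⟩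
  have hco' : ∀ k, Nat.Coprime (g (k + 1)) β := by
    intro k
    induction k with
    | zero => simp [hg1]
    | succ k ih =>
      rw [hgrec, mul_comm β (g k)]
      exact (Nat.coprime_add_mul_right_left _ _ _).mpr (Nat.Coprime.mul hco ih)
  have hcs : Nat.Coprime (g (m + 3)) β := hco' (m + 2)
  haveI : NeZero β := ⟨by omega⟩
  by_contra hcon
  push_neg at hcon
  simp only [show m + 3 - 1 = m + 2 from rfl, show m + 3 - 2 = m + 1 from rfl] at hrep hmax ⊢
  set t := a - α * b with ht
  have hble : α * b ≤ a := by nlinarith [Nat.zero_le ((β - 1) * g (m + 3))]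
  have ht' : t + α * b = a := Nat.sub_add_cancel hble
  have htlt : (β - 1) * g (m + 3) < t := by
    have := Nat.sub_add_cancel hble
    omega
  -- find ℓ < β with ℓ * g_s ≡ t mod β
  have hunit : IsUnit ((g (m + 3) : ZMod β)) := (ZMod.isUnit_iff_coprime _ _).mpr hcs
  set x : ZMod β := (t : ZMod β) * (g (m + 3) : ZMod β)⁻¹ with hx
  set ℓ := x.val with hℓ
  have hℓβ : ℓ < β := ZMod.val_lt x
  have hmod : ((ℓ * g (m + 3) : ℕ) : ZMod β) = (t : ZMod β) := by
    push_cast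
    rw [hℓ, ZMod.natCast_val, ZMod.cast_id, hx, mul_assoc,
      ZMod.inv_mul_of_unit _ hunit, mul_one]
  have hLle : ℓ * g (m + 3) ≤ (β - 1) * g (m + 3) :=
    Nat.mul_le_mul_right _ (by omega)
  have hLlt : ℓ * g (m + 3) < t := lt_of_le_of_lt hLle htlt
  have hdvd : β ∣ t - ℓ * g (m + 3) :=
    (Nat.modEq_iff_dvd' (le_of_lt hLlt)).mp
      ((ZMod.natCast_eq_natCast_iff _ _ _).mp hmod)
  obtain ⟨c, hc⟩ := hdvd
  have hc1 : 1 ≤ c := by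
    rcases Nat.eq_zero_or_pos c with h | h
    · exfalso; rw [h, mul_zero] at hc; omega
    · exact h
  have ha' : a = α * b + ℓ * g (m + 3) + β * c := by
    have h2 : t - ℓ * g (m + 3) + ℓ * g (m + 3) = t :=
      Nat.sub_add_cancel (le_of_lt hLlt)
    omega
  refine hmax ⟨b + ℓ * g (m + 2), c, by omega, hc1, ?_⟩
  rw [hrep, ha', hgrec (m + 1)]
  ring
end

section
/- Suppose n = a·g_t + β·b·g_{t−1} with t ≥ 2, a ≤ (β−1)·g_{t+1} + α·b, b ≤ g_t, and a − α·b − ℓ·g_{t+1} is not a positive multiple of β for any ℓ ≥ 0. Then s(n) = t + 1; i.e., there exist no positive integers a', b' with n = a'·g_{t+1} + β·b'·g_t. -/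
theorem stmt_12 (α β : ℕ) (hα : 1 ≤ α) (hβ : 1 ≤ β) (hco : Nat.Coprime α β)
    (g : ℕ → ℕ) (hg0 : g 0 = 0) (hg1 : g 1 = 1)
    (hgrec : ∀ k, g (k + 2) = α * g (k + 1) + β * g k)
    (n a b t : ℕ) (ha : 1 ≤ a) (hb : 1 ≤ b) (ht : 2 ≤ t)
    (hrep : n = a * g t + β * b * g (t - 1))
    (hab : a ≤ (β - 1) * g (t + 1) + α * b) (hbg : b ≤ g t)
    (hdiv : ∀ ℓ : ℕ, ¬ ∃ m : ℕ, 1 ≤ m ∧ (a : ℤ) - α * b - ℓ * g (t + 1) = β * m) :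
    ¬ ∃ a' b' : ℕ, 1 ≤ a' ∧ 1 ≤ b' ∧ n = a' * g (t + 1) + β * b' * g t := by
  rintro ⟨a', b', ha', hb', hrep'⟩
  -- positivity
  have hgpos : ∀ k, 1 ≤ g (k + 1) := by
    intro k
    induction k with
    | zero => simp [hg1]
    | succ k ih =>
      rw [hgrec]
      calc 1 ≤ α * g (k + 1) := Nat.one_le_iff_ne_zero.2 (by positivity)
        _ ≤ _ := Nat.le_add_right _ _
  -- coprimality with β
  have hcoβ : ∀ k, Nat.Coprime (g (k + 1)) β := by
    intro k
    induction k with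
    | zero => simp [hg1]
    | succ k ih =>
      rw [hgrec]
      exact (Nat.coprime_add_mul_left_left (α * g (k + 1)) β (g k)).2 (hco.mul ih)
  -- coprimality of consecutive terms
  have hcons : ∀ k, Nat.Coprime (g (k + 1)) (g k) := by
    intro k
    induction k with
    | zero => simp [hg1]
    | succ k ih =>
      rw [hgrec, add_comm (α * g (k + 1)) (β * g k), mul_comm α (g (k+1))]
      exact (Nat.coprime_add_mul_left_left (β * g k) (g (k+1)) α).2
        (Nat.Coprime.mul (hcoβ k).symm ih.symm)
  obtain ⟨u, rfl⟩ : ∃ u, t = u + 2 := ⟨t - 2, by omega⟩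
  have h1 : g (u + 2 + 1) = α * g (u + 2) + β * g (u + 1) := hgrec (u + 1)
  have h2 : u + 2 - 1 = u + 1 := by omega
  rw [h2] at hrep
  set A := g (u + 2) with hA
  set B := g (u + 1) with hB
  have hApos : 1 ≤ A := hgpos (u + 1)
  -- key integer equation
  have key : (a : ℤ) * A + β * b * B = α * a' * A + β * a' * B + β * b' * A := by
    have := hrep.symm.trans hrep'
    rw [h1] at this
    have := congrArg (Nat.cast : ℕ → ℤ) this
    push_cast at this
    linarith [this]
  have hcopZ : IsCoprime (A : ℤ) ((β : ℤ) * B) := by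
    have : Nat.Coprime A (β * B) := Nat.Coprime.mul_right (hcoβ (u + 1)) (hcons (u + 1))
    exact_mod_cast Nat.isCoprime_iff_coprime.2 this
  have hdvd : (A : ℤ) ∣ ((β : ℤ) * B) * ((a' : ℤ) - b) := by
    refine ⟨(a : ℤ) - α * a' - β * b', ?_⟩
    ring_nf
    ring_nf at key
    linarith [key]
  obtain ⟨k, hk⟩ := hcopZ.dvd_of_dvd_mul_left hdvd
  -- a' = b + A * k
  have ha'eq : (a' : ℤ) = b + A * k := by linarith [hk]
  rcases le_or_gt 0 k with hk0 | hk0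
  · -- k ≥ 0 : contradict hdiv
    have hAne : (A : ℤ) ≠ 0 := by exact_mod_cast Nat.one_le_iff_ne_zero.1 hApos
    have hmain : (a : ℤ) - α * b - k * (α * A + β * B) = β * b' := by
      have h3 : ((a : ℤ) - α * b - k * (α * A + β * B) - β * b') * A = 0 := by
        rw [ha'eq] at key; ring_nf; ring_nf at key; linarith [key]
      have := mul_eq_zero.1 h3
      rcases this with h | h
      · linarith
      · exact absurd h hAne
    obtain ⟨ℓ, rfl⟩ : ∃ ℓ : ℕ, k = (ℓ : ℤ) := ⟨k.toNat, (Int.toNat_of_nonneg hk0).symm⟩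
    refine hdiv ℓ ⟨b', hb', ?_⟩
    rw [h1]; push_cast; linarith [hmain]
  · -- k < 0 : a' ≤ 0, contradiction
    have hk1 : k ≤ -1 := by omega
    have hbA : (b : ℤ) ≤ A := by exact_mod_cast hbg
    have h1a : (1 : ℤ) ≤ a' := by exact_mod_cast ha'
    have hAZ : (1 : ℤ) ≤ A := by exact_mod_cast hApos
    have hmul : (A : ℤ) * k ≤ A * (-1) :=
      mul_le_mul_of_nonneg_left hk1 (by linarith)
    linarith [ha'eq, hmul]
end

section
/- Let s = s(n) > 2 with canonical representation n = a·g_{s−1} + β·b·g_{s−2} (a, b as in the characterization theorem, with b ≤ g_{s−1}). Then |w_{s+1}(b, a) − γ·n| = |λ^{s−1}·(γ·b − a)| ≤ 2·β^s, where γ, λ are the roots of x² = αx + β. -/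
set_option maxHeartbeats 1600000 in
theorem stmt_13 (α β : ℕ) (hα : 1 ≤ α) (hβ : 1 ≤ β) (hco : Nat.Coprime α β)
    (g : ℕ → ℕ) (hg0 : g 0 = 0) (hg1 : g 1 = 1)
    (hgrec : ∀ k, g (k + 2) = α * g (k + 1) + β * g k)
    (γ lam : ℝ)
    (hγ : γ = (α + Real.sqrt (α ^ 2 + 4 * β)) / 2)
    (hlam : lam = (α - Real.sqrt (α ^ 2 + 4 * β)) / 2)
    (n a b s : ℕ) (ha : 1 ≤ a) (hb : 1 ≤ b) (hs : 2 < s)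
    (hrep : n = a * g (s - 1) + β * b * g (s - 2))
    (hmax : ¬ ∃ a' b' : ℕ, 1 ≤ a' ∧ 1 ≤ b' ∧ n = a' * g s + β * b' * g (s - 1))
    (hbg : b ≤ g (s - 1)) (hab : a ≤ (β - 1) * g s + α * b) :
    |((a * g s + β * b * g (s - 1) : ℕ) : ℝ) - γ * n| = |lam ^ (s - 1) * (γ * b - a)| ∧
      |((a * g s + β * b * g (s - 1) : ℕ) : ℝ) - γ * n| ≤ 2 * (β : ℝ) ^ s := by
  set D := Real.sqrt ((α : ℝ) ^ 2 + 4 * β) with hD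
  have hβR : (1 : ℝ) ≤ (β : ℝ) := by exact_mod_cast hβ
  have hαR : (1 : ℝ) ≤ (α : ℝ) := by exact_mod_cast hα
  have hDnn : 0 ≤ D := Real.sqrt_nonneg _
  have hDsq : D ^ 2 = (α : ℝ) ^ 2 + 4 * β := by
    rw [hD]; exact Real.sq_sqrt (by positivity)
  have hDα : (α : ℝ) < D := by nlinarith
  have hγpos : 0 < γ := by rw [hγ]; nlinarith
  have hαγ : (α : ℝ) ≤ γ := by rw [hγ]; nlinarith
  have hlamneg : lam < 0 := by rw [hlam]; nlinarith
  have hsum : γ + lam = α := by rw [hγ, hlam]; ring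
  have hprod : γ * lam = -(β : ℝ) := by rw [hγ, hlam]; linear_combination (-1/4 : ℝ) * hDsq
  have hγsq : γ ^ 2 = α * γ + β := by nlinarith
  -- Binet-type identity
  have A : ∀ k, ((g (k + 1) : ℝ)) - γ * g k = lam ^ k := by
    intro k
    induction k with
    | zero => simp [hg0, hg1]
    | succ k ih =>
      rw [hgrec k]
      push_cast
      linear_combination lam * ih - (g (k + 1) : ℝ) * hsum + (g k : ℝ) * hprod
  -- growth bound
  have B : ∀ k, ((g (k + 1) : ℝ)) ≤ γ ^ k := by
    intro k
    induction k using Nat.twoStepInduction with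
    | zero => simp [hg1]
    | one => rw [hgrec 0]; push_cast [hg0, hg1]; simpa using hαγ
    | more k ih1 ih2 =>
      rw [hgrec (k + 1)]
      push_cast
      calc (α:ℝ) * g (k + 2) + β * g (k + 1) ≤ (α:ℝ) * γ ^ (k + 1) + β * γ ^ k := by
            gcongr <;> positivity
        _ = γ ^ (k + 2) := by linear_combination -(γ ^ k) * hγsq
  obtain ⟨m, rfl⟩ : ∃ m, s = m + 2 := ⟨s - 2, by omega⟩
  subst hrep
  have E : ((a * g (m + 2) + β * b * g (m + 1) : ℕ) : ℝ)
      - γ * ((a * g (m + 1) + β * b * g m : ℕ) : ℝ)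
      = lam ^ (m + 1) * ((a : ℝ) - γ * b) := by
    push_cast
    linear_combination (a : ℝ) * A (m + 1) + (β : ℝ) * (b : ℝ) * A m
      + (b : ℝ) * lam ^ m * hprod
  have habslam : |lam| = (β : ℝ) / γ := by
    rw [abs_of_neg hlamneg]
    field_simp
    linear_combination -hprod
  have hbR : (b : ℝ) ≤ γ ^ m := le_trans (by exact_mod_cast hbg) (B m)
  have hgs : ((g (m + 2) : ℝ)) ≤ γ ^ (m + 1) := B (m + 1)
  have hβ1R : ((β - 1 : ℕ) : ℝ) = (β : ℝ) - 1 := by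
    push_cast [hβ]; ring
  have habR : (a : ℝ) ≤ ((β : ℝ) - 1) * g (m + 2) + α * b := by
    calc (a : ℝ) ≤ ((β - 1) * g (m + 2) + α * b : ℕ) := by exact_mod_cast hab
    _ = ((β : ℝ) - 1) * g (m + 2) + α * b := by push_cast [hβ]; ring
  have hγm : (0:ℝ) < γ ^ m := by positivity
  have hgsnn : (0:ℝ) ≤ (g (m + 2) : ℝ) := by positivity
  have hb0 : (0:ℝ) ≤ (b : ℝ) := by positivity
  have ha0 : (0:ℝ) ≤ (a : ℝ) := by positivity
  have hγb : γ * (b : ℝ) ≤ γ ^ (m + 1) := by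
    rw [pow_succ, mul_comm (γ ^ m) γ]
    exact mul_le_mul_of_nonneg_left hbR hγpos.le
  have hpm1 : (0:ℝ) ≤ γ ^ (m + 1) := by positivity
  have hmono : γ ^ (m + 1) ≤ (β : ℝ) * γ ^ (m + 1) := le_mul_of_one_le_left hpm1 hβR
  have hbnd : |(a : ℝ) - γ * b| ≤ (β : ℝ) * γ ^ (m + 1) := by
    rw [abs_le]
    constructor
    · linarith
    · have h1 : (α : ℝ) * b ≤ γ ^ (m + 1) := by
        rw [pow_succ, mul_comm (γ ^ m) γ]
        exact mul_le_mul hαγ hbR hb0 hγpos.le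
      have h2 : ((β : ℝ) - 1) * g (m + 2) ≤ ((β : ℝ) - 1) * γ ^ (m + 1) :=
        mul_le_mul_of_nonneg_left hgs (by linarith)
      have hgb : (0:ℝ) ≤ γ * b := by positivity
      linarith
  simp only [show m + 2 - 1 = m + 1 from rfl, show m + 2 - 2 = m from rfl]
  refine ⟨?_, ?_⟩
  · rw [E, show lam ^ (m + 1) * (γ * b - a) = -(lam ^ (m + 1) * ((a : ℝ) - γ * b)) by ring,
      abs_neg]
  · rw [E, abs_mul, abs_pow, habslam]
    have key : ((β : ℝ) / γ) ^ (m + 1) * ((β : ℝ) * γ ^ (m + 1)) = (β : ℝ) ^ (m + 2) := by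
      have h := pow_ne_zero (m + 1) hγpos.ne'
      rw [div_pow, div_mul_eq_mul_div, div_eq_iff h]
      ring
    calc ((β : ℝ) / γ) ^ (m + 1) * |(a : ℝ) - γ * b|
        ≤ ((β : ℝ) / γ) ^ (m + 1) * ((β : ℝ) * γ ^ (m + 1)) := by
          apply mul_le_mul_of_nonneg_left hbnd (by positivity)
      _ = (β : ℝ) ^ (m + 2) := key
      _ ≤ 2 * (β : ℝ) ^ (m + 2) := by nlinarith [pow_pos (lt_of_lt_of_le one_pos hβR) (m + 2)]
end

section
/- For t ≥ 2, let n_t = β·g_t·g_{t+1}, a_t = (β−1)·g_{t+1} + α·g_t, b_t = g_t. Then n_t = a_t·g_t + β·b_t·g_{t−1}, b_t ≤ g_t, a_t ≤ (β−1)·g_{t+1} + α·b_t, and a_t − α·b_t − ℓ·g_{t+1} is not a positive multiple of β for any ℓ ≥ 0. -/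
theorem stmt_14 (α β : ℕ) (hα : 1 ≤ α) (hβ : 1 ≤ β) (hco : Nat.Coprime α β)
    (g : ℕ → ℕ) (hg0 : g 0 = 0) (hg1 : g 1 = 1)
    (hgrec : ∀ k, g (k + 2) = α * g (k + 1) + β * g k)
    (t : ℕ) (ht : 2 ≤ t) :
    β * g t * g (t + 1) = ((β - 1) * g (t + 1) + α * g t) * g t + β * g t * g (t - 1) ∧
    g t ≤ g t ∧
    (β - 1) * g (t + 1) + α * g t ≤ (β - 1) * g (t + 1) + α * g t ∧
    ∀ ℓ : ℕ, ¬ ∃ m : ℕ, 1 ≤ m ∧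
      (((β - 1) * g (t + 1) + α * g t : ℕ) : ℤ) - α * g t - ℓ * g (t + 1) = β * m := by
  obtain ⟨b, rfl⟩ : ∃ b, β = b + 1 := ⟨β - 1, by omega⟩
  simp only [Nat.add_sub_cancel]
  have hrec : g (t + 1) = α * g t + (b + 1) * g (t - 1) := by
    obtain ⟨s, rfl⟩ : ∃ s, t = s + 2 := ⟨t - 2, by omega⟩
    simpa using hgrec (s + 1)
  have hcop : ∀ n, Nat.Coprime (b + 1) (g (n + 1)) := by
    intro n
    induction n with
    | zero => simp [hg1]
    | succ n ih =>
      rw [hgrec]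
      exact (Nat.coprime_add_mul_left_right _ _ _).mpr (hco.symm.mul_right ih)
  refine ⟨by rw [hrec]; ring, le_refl _, le_refl _, ?_⟩
  rintro ℓ ⟨m, hm, heq⟩
  have hdvd : ((b : ℤ) + 1) ∣ ((b : ℤ) - ℓ) := by
    have h1 : ((b : ℤ) + 1) ∣ ((b : ℤ) - ℓ) * g (t + 1) := by
      refine ⟨m, ?_⟩
      push_cast at heq ⊢
      linarith
    have hic : IsCoprime ((b : ℤ) + 1) ((g (t + 1) : ℕ) : ℤ) := by
      have := Nat.isCoprime_iff_coprime.mpr (hcop t)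
      push_cast at this ⊢
      exact this
    exact hic.dvd_of_dvd_mul_right h1
  have hgnn : (0 : ℤ) ≤ (g (t + 1) : ℤ) := Int.natCast_nonneg _
  have hℓnn : (0 : ℤ) ≤ (ℓ : ℤ) := Int.natCast_nonneg _
  have hprod : ((b : ℤ) - ℓ) * g (t + 1) = ((b : ℤ) + 1) * m := by
    push_cast at heq ⊢
    linarith
  have hmpos : (1 : ℤ) ≤ (m : ℤ) := by exact_mod_cast hm
  have hpos : (0 : ℤ) < (b : ℤ) - ℓ := by
    by_contra h
    push_neg at h
    have : ((b : ℤ) - ℓ) * g (t + 1) ≤ 0 := mul_nonpos_of_nonpos_of_nonneg h hgnn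
    nlinarith
  have := Int.le_of_dvd hpos hdvd
  omega
end

section
/- If s(n) > 2, then the number of positive-integer solutions (b, a) to n = a·g_{s(n)−1} + β·b·g_{s(n)−2} is at most α² + 2β − 1. -/
theorem stmt_15 (α β : ℕ) (hα : 1 ≤ α) (hβ : 1 ≤ β) (hco : Nat.Coprime α β)
    (g : ℕ → ℕ) (hg0 : g 0 = 0) (hg1 : g 1 = 1)
    (hgrec : ∀ k, g (k + 2) = α * g (k + 1) + β * g k)
    (n s : ℕ) (hs : 2 < s)
    (hrep : ∃ a b : ℕ, 1 ≤ a ∧ 1 ≤ b ∧ n = a * g (s - 1) + β * b * g (s - 2))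
    (hmax : ¬ ∃ a' b' : ℕ, 1 ≤ a' ∧ 1 ≤ b' ∧ n = a' * g s + β * b' * g (s - 1)) :
    {p : ℕ × ℕ | 1 ≤ p.1 ∧ 1 ≤ p.2 ∧ n = p.2 * g (s - 1) + β * p.1 * g (s - 2)}.ncard
      ≤ α ^ 2 + 2 * β - 1 := by
  -- positivity of g at positive indices
  have hpos : ∀ k, 1 ≤ g (k + 1) := by
    intro k
    induction k with
    | zero => rw [hg1]
    | succ k ih =>
      rw [hgrec]
      calc 1 ≤ g (k + 1) := ih
        _ ≤ α * g (k + 1) := Nat.le_mul_of_pos_left _ hα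
        _ ≤ α * g (k + 1) + β * g k := Nat.le_add_right _ _
  -- coprimality with β
  have hcopβ : ∀ k, Nat.Coprime (g (k + 1)) β := by
    intro k
    induction k with
    | zero => rw [hg1]; exact Nat.coprime_one_left β
    | succ k ih =>
      rw [hgrec]
      have h1 : Nat.Coprime (α * g (k + 1)) β := hco.mul ih
      exact (Nat.coprime_add_mul_left_left (α * g (k + 1)) β (g k)).mpr h1
  -- coprimality of consecutive terms
  have hcons : ∀ k, Nat.Coprime (g (k + 2)) (g (k + 1)) := by
    intro k
    induction k with
    | zero => rw [hg1]; exact Nat.coprime_one_right _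
    | succ k ih =>
      rw [hgrec (k+1)]
      have h1 : Nat.Coprime (β * g (k + 1)) (g (k + 2)) :=
        ((hcopβ (k + 1)).symm).mul ih.symm
      have := (Nat.coprime_add_mul_right_left (β * g (k + 1)) (g (k + 2)) α).mpr h1
      rw [Nat.add_comm (α * g (k+2)) (β * g (k+1))]
      exact this
  set P := g (s - 1) with hP
  set Q := g (s - 2) with hQ
  set R := g (s - 3) with hR
  have e1 : g s = α * P + β * Q := by
    have h := hgrec (s - 2)
    have h2 : s - 2 + 2 = s := by omega
    have h3 : s - 2 + 1 = s - 1 := by omega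
    rw [h2, h3] at h
    exact h
  have e2 : P = α * Q + β * R := by
    have h := hgrec (s - 3)
    have h2 : s - 3 + 2 = s - 1 := by omega
    have h3 : s - 3 + 1 = s - 2 := by omega
    rw [h2, h3] at h
    exact h
  have hQ1 : 1 ≤ Q := by
    have := hpos (s - 3)
    have h3 : s - 3 + 1 = s - 2 := by omega
    rwa [h3] at this
  have hP1 : 1 ≤ P := by
    have := hpos (s - 2)
    have h3 : s - 2 + 1 = s - 1 := by omega
    rwa [h3] at this
  have hQR : α * R ≤ Q := by
    by_cases h4 : s = 3
    · subst h4
      simp only [hQ, hR] at *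
      norm_num [hg0, hg1]
    · have h := hgrec (s - 4)
      have h2 : s - 4 + 2 = s - 2 := by omega
      have h3 : s - 4 + 1 = s - 3 := by omega
      rw [h2, h3] at h
      have h' : Q = α * R + β * g (s - 4) := by rw [hQ, hR]; exact h
      omega
  have hcopQP : Nat.Coprime Q P := by
    have := hcons (s - 3)
    have h2 : s - 3 + 2 = s - 1 := by omega
    have h3 : s - 3 + 1 = s - 2 := by omega
    rw [h2, h3] at this
    exact this.symm
  have hcopPβ : Nat.Coprime P β := by
    have := hcopβ (s - 2)
    have h3 : s - 2 + 1 = s - 1 := by omega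
    rwa [h3] at this
  have hcopβQP : Nat.Coprime (β * Q) P := hcopPβ.symm.mul hcopQP
  have hcopαPβ : Nat.Coprime (α * P) β := hco.mul hcopPβ
  set S := {p : ℕ × ℕ | 1 ≤ p.1 ∧ 1 ≤ p.2 ∧ n = p.2 * P + β * p.1 * Q} with hSdef
  -- finiteness
  have hfin : S.Finite := by
    apply Set.Finite.subset (Set.finite_Icc (1,1) (n,n))
    intro p hp
    obtain ⟨h1, h2, h3⟩ := hp
    simp only [Set.mem_Icc, Prod.le_def]
    refine ⟨⟨h1, h2⟩, ?_, ?_⟩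
    · have : p.1 = 1 * p.1 * 1 := by ring
      have hb : 1 * p.1 * 1 ≤ β * p.1 * Q := Nat.mul_le_mul (Nat.mul_le_mul hβ le_rfl) hQ1
      omega
    · have hb : p.2 * 1 ≤ p.2 * P := Nat.mul_le_mul le_rfl hP1
      omega
  by_contra hcon
  push_neg at hcon
  set K := α ^ 2 + 2 * β - 1 with hK
  -- key divisibility between members
  have key : ∀ p q : ℕ × ℕ, p ∈ S → q ∈ S → p.2 ≤ q.2 → β * Q ∣ q.2 - p.2 := by
    intro p q hp hq hle
    obtain ⟨hp1, hp2, hpe⟩ := hp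
    obtain ⟨hq1, hq2, hqe⟩ := hq
    have hz : ((q.2 : ℤ) - p.2) * P = ((p.1 : ℤ) - q.1) * (β * Q) := by
      have h1 : (n : ℤ) = p.2 * P + β * p.1 * Q := by exact_mod_cast hpe
      have h2 : (n : ℤ) = q.2 * P + β * q.1 * Q := by exact_mod_cast hqe
      linear_combination h1 - h2
    have hcop : IsCoprime ((β * Q : ℕ) : ℤ) ((P : ℕ) : ℤ) :=
      Nat.isCoprime_iff_coprime.mpr hcopβQP
    have hdvd : ((β * Q : ℕ) : ℤ) ∣ ((q.2 : ℤ) - p.2) := by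
      apply hcop.dvd_of_dvd_mul_right
      rw [hz]
      exact ⟨(p.1 : ℤ) - q.1, by push_cast; ring⟩
    have : ((β * Q : ℕ) : ℤ) ∣ ((q.2 - p.2 : ℕ) : ℤ) := by
      rwa [Nat.cast_sub hle]
    exact_mod_cast this
  have hScard : S.ncard = hfin.toFinset.card := Set.ncard_eq_toFinset_card S hfin
  set F := hfin.toFinset with hF
  have hmemF : ∀ p : ℕ × ℕ, p ∈ F ↔ p ∈ S := fun p => hfin.mem_toFinset
  have hFne : F.Nonempty := by
    obtain ⟨a, b, ha, hb, he⟩ := hrep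
    exact ⟨(b, a), (hmemF _).mpr ⟨hb, ha, he⟩⟩
  set A := F.image Prod.snd with hA
  have hAne : A.Nonempty := hFne.image _
  set a₁ := A.min' hAne with ha₁
  set a₂ := A.max' hAne with ha₂
  obtain ⟨p₁, hp₁F, hp₁2⟩ := Finset.mem_image.mp (A.min'_mem hAne)
  obtain ⟨p₂, hp₂F, hp₂2⟩ := Finset.mem_image.mp (A.max'_mem hAne)
  rw [← ha₁] at hp₁2
  rw [← ha₂] at hp₂2
  have hp₁S : p₁ ∈ S := (hmemF _).mp hp₁F
  have hp₂S : p₂ ∈ S := (hmemF _).mp hp₂F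
  have hmem2 : ∀ p ∈ F, a₁ ≤ p.2 ∧ p.2 ≤ a₂ := fun p hp =>
    ⟨A.min'_le _ (Finset.mem_image_of_mem _ hp), A.le_max' _ (Finset.mem_image_of_mem _ hp)⟩
  have hβQ1 : 1 ≤ β * Q := le_trans hβ (Nat.le_mul_of_pos_right _ (by omega))
  set m := (a₂ - a₁) / (β * Q) with hm
  have hcard : F.card ≤ m + 1 := by
    have := Finset.card_le_card_of_injOn (s := F) (t := Finset.range (m + 1))
      (fun p : ℕ × ℕ => (p.2 - a₁) / (β * Q)) ?_ ?_
    · simpa using this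
    · intro p hp
      simp only [Finset.mem_coe, Finset.mem_range]
      have h1 := hmem2 p hp
      have h2 : (p.2 - a₁) ≤ (a₂ - a₁) := by omega
      have h3 := Nat.div_le_div_right (c := β * Q) h2
      omega
    · intro p hp q hq hfeq
      simp only at hfeq
      have hpS := (hmemF _).mp hp
      have hqS := (hmemF _).mp hq
      have hd1 : β * Q ∣ p.2 - a₁ := by
        have := key p₁ p hp₁S hpS (by rw [hp₁2]; exact (hmem2 p hp).1)
        rwa [hp₁2] at this
      have hd2 : β * Q ∣ q.2 - a₁ := by
        have := key p₁ q hp₁S hqS (by rw [hp₁2]; exact (hmem2 q hq).1)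
        rwa [hp₁2] at this
      have h1 : (p.2 - a₁) / (β * Q) * (β * Q) = p.2 - a₁ := Nat.div_mul_cancel hd1
      have h2 : (q.2 - a₁) / (β * Q) * (β * Q) = q.2 - a₁ := Nat.div_mul_cancel hd2
      have h2eq : p.2 = q.2 := by
        have h3 := (hmem2 p hp).1
        have h4 := (hmem2 q hq).1
        rw [hfeq] at h1
        omega
      obtain ⟨_, _, hpe⟩ := hpS
      obtain ⟨_, _, hqe⟩ := hqS
      have h5 : β * (p.1 * Q) = β * (q.1 * Q) := by
        rw [h2eq] at hpe
        have h6 := Nat.add_left_cancel (hpe.symm.trans hqe)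
        calc β * (p.1 * Q) = β * p.1 * Q := by ring
          _ = β * q.1 * Q := h6
          _ = β * (q.1 * Q) := by ring
      have h7 : p.1 * Q = q.1 * Q := Nat.eq_of_mul_eq_mul_left (by omega) h5
      have h8 : p.1 = q.1 := Nat.eq_of_mul_eq_mul_right (by omega) h7
      exact Prod.ext h8 h2eq
  have ha₁a₂ : a₁ ≤ a₂ := by
    rw [ha₁, ha₂]; exact A.min'_le _ (A.max'_mem hAne)
  have hKm : K ≤ m := by
    rw [hScard] at hcon
    omega
  have hdvd12 : β * Q ∣ a₂ - a₁ := by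
    have := key p₁ p₂ hp₁S hp₂S (by rw [hp₁2, hp₂2]; exact ha₁a₂)
    rwa [hp₁2, hp₂2] at this
  have hgap : a₁ + K * (β * Q) ≤ a₂ := by
    have h1 : m * (β * Q) = a₂ - a₁ := Nat.div_mul_cancel hdvd12
    have h2 : K * (β * Q) ≤ m * (β * Q) := Nat.mul_le_mul_right _ hKm
    omega
  have ha₁1 : 1 ≤ a₁ := by
    obtain ⟨_, h, _⟩ := hp₁S
    omega
  obtain ⟨hb₂1, hb₂2, hn₂'⟩ := hp₂S
  have hn₂ : n = a₂ * P + β * p₂.1 * Q := by rw [← hp₂2]; exact hn₂'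
  have hb₂P : p₂.1 ≤ P := by
    by_contra hbig
    push_neg at hbig
    have hqmem : (p₂.1 - P, a₂ + β * Q) ∈ S := by
      refine ⟨by omega, by omega, ?_⟩
      have h1 : (n : ℤ) = a₂ * P + β * p₂.1 * Q := by exact_mod_cast hn₂
      zify [hbig.le]
      linear_combination h1
    have h2 := (hmem2 _ ((hmemF _).mpr hqmem)).2
    simp only at h2
    omega
  -- choice of j via ZMod β
  haveI : NeZero β := ⟨by omega⟩
  set j := (((a₂ : ZMod β) - α * (p₂.1 : ZMod β)) * ((α : ZMod β) * (P : ZMod β))⁻¹).val with hj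
  have hjβ : j < β := ZMod.val_lt _
  have hunit : IsUnit ((α : ZMod β) * (P : ZMod β)) := by
    have h := (ZMod.isUnit_iff_coprime (α * P) β).mpr hcopαPβ
    push_cast at h
    exact h
  have hjeq : (j : ZMod β) * ((α : ZMod β) * P) = (a₂ : ZMod β) - α * p₂.1 := by
    rw [hj, ZMod.natCast_rightInverse _, mul_assoc, ZMod.inv_mul_of_unit _ hunit, mul_one]
  have hdvdD : (β : ℤ) ∣ ((a₂ : ℤ) - j * (β * Q) - α * ((p₂.1 : ℤ) + j * P)) := by
    apply (ZMod.intCast_zmod_eq_zero_iff_dvd _ β).mp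
    push_cast
    rw [ZMod.natCast_self]
    linear_combination -hjeq
  obtain ⟨c, hc⟩ := hdvdD
  -- positivity of D
  have e2z : (P : ℤ) = α * Q + β * R := by exact_mod_cast e2
  have h1le : 1 ≤ α ^ 2 + 2 * β := le_trans (Nat.one_le_pow 2 α (by omega)) (Nat.le_add_right _ _)
  have hgapz : (a₁ : ℤ) + ((α : ℤ) ^ 2 + 2 * β - 1) * ((β : ℤ) * Q) ≤ a₂ := by
    have h := hgap
    rw [hK] at h
    zify [h1le] at h
    linarith
  have hb₂z : (p₂.1 : ℤ) ≤ P := by exact_mod_cast hb₂P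
  have hjz : (j : ℤ) ≤ (β : ℤ) - 1 := by omega
  have ha₁z : 1 ≤ (a₁ : ℤ) := by exact_mod_cast ha₁1
  have hQRz : (α : ℤ) * R ≤ Q := by exact_mod_cast hQR
  have hQz : 1 ≤ (Q : ℤ) := by exact_mod_cast hQ1
  have hβz : 1 ≤ (β : ℤ) := by exact_mod_cast hβ
  have hαz : 1 ≤ (α : ℤ) := by exact_mod_cast hα
  have hPz : 1 ≤ (P : ℤ) := by exact_mod_cast hP1
  have hjnn : 0 ≤ (j : ℤ) := by positivity
  have t1 : (j : ℤ) * ((β : ℤ) * Q + α * P) ≤ ((β : ℤ) - 1) * ((β : ℤ) * Q + α * P) := by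
    apply mul_le_mul_of_nonneg_right hjz
    positivity
  have t2 : (α : ℤ) * (p₂.1 : ℤ) ≤ (α : ℤ) * P :=
    mul_le_mul_of_nonneg_left hb₂z (by positivity)
  have t3 : 0 ≤ (β : ℤ) * ((β : ℤ) * ((Q : ℤ) - α * R)) := by
    apply mul_nonneg (by positivity)
    apply mul_nonneg (by positivity)
    linarith
  have hE : (β : ℤ) * ((β : ℤ) * ((Q : ℤ) - α * R))
      = ((α : ℤ) ^ 2 + 2 * β - 1) * ((β : ℤ) * Q) - α * P - ((β : ℤ) - 1) * ((β : ℤ) * Q + α * P) := by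
    linear_combination ((α : ℤ) * β) * e2z
  have hD1 : 1 ≤ (a₂ : ℤ) - j * (β * Q) - α * ((p₂.1 : ℤ) + j * P) := by
    linarith [t1, t2, t3, hE, hgapz, ha₁z]
  have hc1 : 1 ≤ c := by
    by_contra hcc
    push_neg at hcc
    have hcc0 : c ≤ 0 := by omega
    have : (β : ℤ) * c ≤ 0 := mul_nonpos_of_nonneg_of_nonpos (by positivity) hcc0
    linarith [hc, hD1]
  set d := c.toNat with hd
  have hdc : (d : ℤ) = c := Int.toNat_of_nonneg (by omega)
  apply hmax
  refine ⟨p₂.1 + j * P, d, by omega, by omega, ?_⟩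
  have e1z : (g s : ℤ) = α * P + β * Q := by exact_mod_cast e1
  have hnz : (n : ℤ) = a₂ * P + β * p₂.1 * Q := by exact_mod_cast hn₂
  have hfinal : (n : ℤ) = ((p₂.1 : ℤ) + j * P) * (g s) + β * d * P := by
    rw [e1z, hdc]
    linear_combination hnz + (P : ℤ) * hc
  exact_mod_cast hfinal
end

section
/- For all n with s = s(n) > 2, one has (1/2)·log_γ(n) − 1 ≤ s(n) ≤ log_γ(n) + 2, where γ = (α + √(α²+4β))/2. -/
theorem sylvester_aux (x y n : ℕ) (hx : 2 ≤ x) (hy : 1 ≤ y) (hco : Nat.Coprime x y)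
    (hn : x * y < n) : ∃ a b : ℕ, 1 ≤ a ∧ 1 ≤ b ∧ n = a * x + b * y := by
  rcases eq_or_lt_of_le hy with h1 | h1
  · refine ⟨1, n - x, le_refl 1, ?_, ?_⟩ <;> · subst h1; simp at hn ⊢; omega
  · have hfr := frobeniusNumber_pair hco hx h1
    have hxy : x + y ≤ x * y := Nat.add_le_mul hx h1
    have hk : x * y - x - y < n - x - y := by omega
    have hmem : (n - x - y) ∈ AddSubmonoid.closure ({x, y} : Set ℕ) := by
      by_contra hc
      exact absurd (hfr.2 hc) (not_le.mpr hk)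
    rw [AddSubmonoid.mem_closure_pair] at hmem
    obtain ⟨a, b, hab⟩ := hmem
    simp only [smul_eq_mul] at hab
    refine ⟨a + 1, b + 1, Nat.le_add_left 1 a, Nat.le_add_left 1 b, ?_⟩
    calc n = (n - x - y) + (x + y) := by omega
      _ = (a * x + b * y) + (x + y) := by rw [hab]
      _ = (a + 1) * x + (b + 1) * y := by ring

set_option maxHeartbeats 1000000 in
theorem stmt_16 (α β : ℕ) (hα : 1 ≤ α) (hβ : 1 ≤ β) (hco : Nat.Coprime α β)
    (g : ℕ → ℕ) (hg0 : g 0 = 0) (hg1 : g 1 = 1)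
    (hgrec : ∀ k, g (k + 2) = α * g (k + 1) + β * g k)
    (γ : ℝ) (hγ : γ = (α + Real.sqrt (α ^ 2 + 4 * β)) / 2)
    (n s : ℕ) (hs : 2 < s)
    (hrep : ∃ a b : ℕ, 1 ≤ a ∧ 1 ≤ b ∧ n = a * g (s - 1) + β * b * g (s - 2))
    (hmax : ¬ ∃ a' b' : ℕ, 1 ≤ a' ∧ 1 ≤ b' ∧ n = a' * g s + β * b' * g (s - 1)) :
    (1 / 2) * Real.logb γ n - 1 ≤ (s : ℝ) ∧ (s : ℝ) ≤ Real.logb γ n + 2 := by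
  have hα' : (1 : ℝ) ≤ (α : ℝ) := by exact_mod_cast hα
  have hβ' : (1 : ℝ) ≤ (β : ℝ) := by exact_mod_cast hβ
  have hD : (0:ℝ) ≤ (α:ℝ)^2 + 4*β := by positivity
  have hsq : Real.sqrt ((α:ℝ)^2 + 4*β) ^ 2 = (α:ℝ)^2 + 4*β := Real.sq_sqrt hD
  have hsqnn : 0 ≤ Real.sqrt ((α:ℝ)^2 + 4*β) := Real.sqrt_nonneg _
  have hγα : (α : ℝ) < γ := by
    have h1 : (α:ℝ) < Real.sqrt ((α:ℝ)^2 + 4*β) := by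
      nlinarith [hsq, hsqnn]
    rw [hγ]; push_cast; linarith
  have hγ1 : 1 < γ := lt_of_le_of_lt hα' hγα
  have hγ0 : 0 < γ := lt_trans one_pos hγ1
  have hγ2 : γ ^ 2 = α * γ + β := by
    rw [hγ]; push_cast; nlinarith [hsq]
  have hγab : γ ≤ (α : ℝ) + β := by
    have h2 : Real.sqrt ((α:ℝ)^2 + 4*β) ≤ (α:ℝ) + 2*β := by
      nlinarith [hsq, hsqnn, sq_nonneg (Real.sqrt ((α:ℝ)^2 + 4*β) - ((α:ℝ) + 2*β))]
    rw [hγ]; push_cast; linarith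
  -- positivity of g
  have hgpos : ∀ k, 1 ≤ g (k + 1) := by
    intro k
    induction k using Nat.twoStepInduction with
    | zero => simp [hg1]
    | one =>
      have h := hgrec 0
      norm_num at h
      rw [hg0, hg1] at h
      show 1 ≤ g 2
      nlinarith [h, hα]
    | more k ih1 ih2 =>
      have h := hgrec (k + 1)
      show 1 ≤ g (k + 3)
      norm_num at h ih2
      nlinarith [h, ih2, hα, hβ]
  -- coprimality
  have hcop : ∀ k, Nat.Coprime (g (k + 1)) (β * g k) := by
    intro k
    induction k with
    | zero => rw [hg1]; exact Nat.coprime_one_left _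
    | succ k ih =>
      have h1 : Nat.Coprime (g (k + 1)) β :=
        Nat.Coprime.coprime_dvd_right (dvd_mul_right β (g k)) ih
      have h2 : Nat.Coprime (g (k + 2)) β := by
        rw [hgrec k]
        exact (Nat.coprime_add_mul_left_left _ _ _).mpr (Nat.Coprime.mul hco h1)
      have h3 : Nat.Coprime (g (k + 2)) (g (k + 1)) := by
        rw [hgrec k, add_comm]
        exact (Nat.coprime_add_mul_right_left _ _ _).mpr ih.symm
      exact Nat.Coprime.mul_right h2 h3
  -- upper bound: g (k+1) ≤ γ^k
  have hub : ∀ k, (g (k + 1) : ℝ) ≤ γ ^ k := by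
    intro k
    induction k using Nat.twoStepInduction with
    | zero => simp [hg1]
    | one =>
      have h2 : g 2 = α := by rw [hgrec 0, hg0, hg1]; ring
      rw [h2, pow_one]; exact hγα.le
    | more k ih1 ih2 =>
      have hr := hgrec (k + 1)
      have : (g (k + 3) : ℝ) = α * g (k + 2) + β * g (k + 1) := by
        rw [hr]; push_cast; ring
      have hpk : (0:ℝ) < γ ^ k := pow_pos hγ0 k
      calc (g (k + 1 + 2) : ℝ) = α * g (k + 2) + β * g (k + 1) := this
        _ ≤ α * γ ^ (k + 1) + β * γ ^ k := by
            have h4 : (0:ℝ) ≤ (α:ℝ) := by linarith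
            have h5 : (0:ℝ) ≤ (β:ℝ) := by linarith
            nlinarith [ih1, ih2]
        _ = γ ^ k * (α * γ + β) := by ring
        _ = γ ^ k * γ ^ 2 := by rw [hγ2]
        _ = γ ^ (k + 2) := by ring
  -- lower bound: γ^k ≤ g (k+1) + β * g k
  have hlb : ∀ k, γ ^ k ≤ (g (k + 1) : ℝ) + β * g k := by
    intro k
    induction k using Nat.twoStepInduction with
    | zero => simp [hg1, hg0]
    | one =>
      have h2 : g 2 = α := by rw [hgrec 0, hg0, hg1]; ring
      rw [h2, hg1, pow_one]; push_cast; linarith [hγab]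
    | more k ih1 ih2 =>
      have hT : (g (k + 3) : ℝ) + β * g (k + 2)
          = α * ((g (k + 2) : ℝ) + β * g (k + 1)) + β * ((g (k + 1) : ℝ) + β * g k) := by
        rw [hgrec (k + 1), hgrec k]; push_cast; ring
      have hpk : (0:ℝ) < γ ^ k := pow_pos hγ0 k
      calc γ ^ (k + 2) = γ ^ k * γ ^ 2 := by ring
        _ = γ ^ k * (α * γ + β) := by rw [hγ2]
        _ = α * γ ^ (k + 1) + β * γ ^ k := by ring
        _ ≤ α * ((g (k + 2) : ℝ) + β * g (k + 1)) + β * ((g (k + 1) : ℝ) + β * g k) := by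
            nlinarith [ih1, ih2, hα', hβ']
        _ = (g (k + 1 + 2) : ℝ) + β * g (k + 1 + 1) := by rw [← hT]
  -- lower bound on n
  obtain ⟨a, b, ha, hb, hn⟩ := hrep
  have hs1 : s - 2 + 1 = s - 1 := by omega
  have hs2 : s - 1 + 1 = s := by omega
  have hnat_lb : g (s - 1) + β * g (s - 2) ≤ n := by
    have h1 : 1 * g (s - 1) ≤ a * g (s - 1) := Nat.mul_le_mul_right _ ha
    have h2 : β * 1 * g (s - 2) ≤ β * b * g (s - 2) :=
      Nat.mul_le_mul_right _ (Nat.mul_le_mul_left _ hb)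
    calc g (s - 1) + β * g (s - 2) ≤ a * g (s - 1) + β * b * g (s - 2) := by
          simpa using Nat.add_le_add h1 h2
      _ = n := hn.symm
  have hnlb : γ ^ (s - 2) ≤ (n : ℝ) := by
    calc γ ^ (s - 2) ≤ (g (s - 2 + 1) : ℝ) + β * g (s - 2) := hlb (s - 2)
      _ = ((g (s - 1) + β * g (s - 2) : ℕ) : ℝ) := by rw [hs1]; push_cast; ring
      _ ≤ (n : ℝ) := by exact_mod_cast hnat_lb
  have hn1 : (1 : ℝ) ≤ (n : ℝ) := le_trans (one_le_pow₀ hγ1.le) hnlb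
  have hnpos : (0 : ℝ) < (n : ℝ) := lt_of_lt_of_le one_pos hn1
  -- upper bound on n via sylvester
  have hgs2 : 2 ≤ g s := by
    have hr : g s = α * g (s - 1) + β * g (s - 2) := by
      have h := hgrec (s - 2)
      rw [hs1, show s - 2 + 2 = s by omega] at h
      exact h
    have p1 := hgpos (s - 2)
    have p2 := hgpos (s - 3)
    have e1 : s - 2 + 1 = s - 1 := by omega
    have e2 : s - 3 + 1 = s - 2 := by omega
    rw [e1] at p1; rw [e2] at p2
    nlinarith [hr, hα, hβ]
  have hy1 : 1 ≤ β * g (s - 1) := by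
    have p1 := hgpos (s - 2)
    rw [hs1] at p1
    exact Nat.one_le_iff_ne_zero.mpr (by positivity)
  have hcop' : Nat.Coprime (g s) (β * g (s - 1)) := by
    have := hcop (s - 1)
    rw [hs2] at this; exact this
  have hnub : n ≤ g s * (β * g (s - 1)) := by
    by_contra h
    push_neg at h
    obtain ⟨a', b', ha', hb', hab⟩ := sylvester_aux (g s) (β * g (s - 1)) n hgs2 hy1 hcop' h
    exact hmax ⟨a', b', ha', hb', by rw [hab]; ring⟩
  have hnub' : (n : ℝ) ≤ γ ^ (2 * s - 1) := by
    have u1 : (g s : ℝ) ≤ γ ^ (s - 1) := by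
      have := hub (s - 1); rw [hs2] at this; exact this
    have u2 : (g (s - 1) : ℝ) ≤ γ ^ (s - 2) := by
      have := hub (s - 2); rw [hs1] at this; exact this
    have hβγ : (β : ℝ) ≤ γ ^ 2 := by
      rw [hγ2]; nlinarith [hγ0, hα']
    have hg0s : (0:ℝ) ≤ (g s : ℝ) := Nat.cast_nonneg _
    have hg0s1 : (0:ℝ) ≤ (g (s - 1) : ℝ) := Nat.cast_nonneg _
    calc (n : ℝ) ≤ (g s : ℝ) * (β * g (s - 1)) := by exact_mod_cast hnub
      _ ≤ γ ^ (s - 1) * (γ ^ 2 * γ ^ (s - 2)) := by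
          have hp1 : (0:ℝ) ≤ γ ^ (s - 1) := (pow_pos hγ0 _).le
          have hb1 : (0:ℝ) ≤ (β : ℝ) * (g (s - 1) : ℝ) := by positivity
          have m0 : (β : ℝ) * (g (s - 1) : ℝ) ≤ γ ^ 2 * γ ^ (s - 2) :=
            mul_le_mul hβγ u2 hg0s1 (by positivity)
          have m1 : (g s : ℝ) * ((β : ℝ) * (g (s - 1) : ℝ)) ≤ γ ^ (s - 1) * ((β : ℝ) * (g (s - 1) : ℝ)) :=
            mul_le_mul_of_nonneg_right u1 hb1
          have m2 : γ ^ (s - 1) * ((β : ℝ) * (g (s - 1) : ℝ)) ≤ γ ^ (s - 1) * (γ ^ 2 * γ ^ (s - 2)) :=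
            mul_le_mul_of_nonneg_left m0 hp1
          linarith
      _ = γ ^ ((s - 1) + 2 + (s - 2)) := by rw [pow_add, pow_add]; ring
      _ = γ ^ (2 * s - 1) := by congr 1; omega
  -- conclude via logb
  have hlogb_lb : ((s : ℝ) - 2) ≤ Real.logb γ n := by
    have h1 : Real.logb γ (γ ^ (s - 2)) ≤ Real.logb γ n :=
      Real.logb_le_logb_of_le hγ1 (pow_pos hγ0 _) hnlb
    have h2 : Real.logb γ (γ ^ (s - 2)) = ((s - 2 : ℕ) : ℝ) := by
      rw [← Real.rpow_natCast γ (s - 2), Real.logb_rpow hγ0 (by linarith)]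
    rw [h2] at h1
    have : ((s - 2 : ℕ) : ℝ) = (s : ℝ) - 2 := by
      have : (2 : ℕ) ≤ s := by omega
      push_cast [Nat.cast_sub this]; ring
    linarith [h1, this.symm.le, this.le]
  have hlogb_ub : Real.logb γ n ≤ 2 * (s : ℝ) - 1 := by
    have h1 : Real.logb γ n ≤ Real.logb γ (γ ^ (2 * s - 1)) :=
      Real.logb_le_logb_of_le hγ1 hnpos hnub'
    have h2 : Real.logb γ (γ ^ (2 * s - 1)) = ((2 * s - 1 : ℕ) : ℝ) := by
      rw [← Real.rpow_natCast γ (2 * s - 1), Real.logb_rpow hγ0 (by linarith)]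
    rw [h2] at h1
    have h3 : ((2 * s - 1 : ℕ) : ℝ) = 2 * (s : ℝ) - 1 := by
      have : (1 : ℕ) ≤ 2 * s := by omega
      push_cast [Nat.cast_sub this]; ring
    linarith [h1, h3.le]
  constructor
  · linarith
  · linarith
end

section
/- In the Fibonacci case (α = β = 1), if s(n) > 2 then s(n) ≥ (1/2)·log_φ(n) + 2, where φ is the golden ratio. -/
open Real

/-- Frobenius-type lemma: if `m, k` are coprime positive integers and `n > m*k`,
then `n = a*m + b*k` with `a, b ≥ 1`. -/
lemma frob_rep (m k n : ℕ) (hm : 1 ≤ m) (hk : 1 ≤ k) (hco : Nat.Coprime m k)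
    (h : m * k < n) : ∃ a b : ℕ, 1 ≤ a ∧ 1 ≤ b ∧ n = a * m + b * k := by
  have hco' : IsCoprime (m : ℤ) (k : ℤ) := by
    rw [Int.isCoprime_iff_gcd_eq_one]; exact_mod_cast hco
  obtain ⟨u, v, huv⟩ := hco'
  have hkZ : (0 : ℤ) < k := by exact_mod_cast hk
  set a : ℤ := ((n : ℤ) * u - 1) % k + 1 with ha
  have h1 : 1 ≤ a := by
    have := Int.emod_nonneg ((n : ℤ) * u - 1) (by positivity : (k : ℤ) ≠ 0)
    omega
  have h2 : a ≤ k := by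
    have := Int.emod_lt_of_pos ((n : ℤ) * u - 1) hkZ
    omega
  -- a ≡ n*u (mod k)
  have hdvd : (k : ℤ) ∣ ((n : ℤ) * u - a) := by
    have := Int.emod_emod_of_dvd ((n : ℤ) * u - 1) (dvd_refl (k : ℤ))
    have h3 : ((n : ℤ) * u - 1) % k = (n : ℤ) * u - 1 - k * (((n : ℤ) * u - 1) / k) :=
      Int.emod_def _ _
    exact ⟨((n : ℤ) * u - 1) / k, by rw [ha, h3]; ring⟩
  obtain ⟨q, hq⟩ := hdvd
  -- n - a*m = k * (n*v + q*m)
  set b : ℤ := (n : ℤ) * v + q * m with hb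
  have hn : (n : ℤ) = a * m + b * k := by
    have : a = (n : ℤ) * u - k * q := by omega
    rw [this, hb]
    have : (n : ℤ) * (u * m + v * k) = (n : ℤ) * 1 := by rw [huv]
    nlinarith [this]
  have hbk : 1 ≤ b := by
    have hmZ : (0 : ℤ) < m := by exact_mod_cast hm
    have hnZ : (m : ℤ) * k < n := by exact_mod_cast h
    have : b * k > 0 := by nlinarith
    nlinarith
  refine ⟨a.toNat, b.toNat, ?_, ?_, ?_⟩
  · omega
  · omega
  · have : (n : ℤ) = (a.toNat : ℤ) * m + (b.toNat : ℤ) * k := by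
      rw [Int.toNat_of_nonneg (by omega), Int.toNat_of_nonneg (by omega)]; exact hn
    exact_mod_cast this

lemma gold_pow_five : goldenRatio ^ 5 = 5 * goldenRatio + 3 := by
  linear_combination (goldenRatio ^ 3 + goldenRatio ^ 2 + 2 * goldenRatio + 3) * goldenRatio_sq

/-- Binet-based bound: `fib (t+3) * fib (t+2) ≤ φ^(2t+2)`. -/
lemma fib_prod_le (t : ℕ) :
    (Nat.fib (t + 3) : ℝ) * (Nat.fib (t + 2) : ℝ) ≤ goldenRatio ^ (2 * t + 2) := by
  have h5 : Real.sqrt 5 * Real.sqrt 5 = 5 := Real.mul_self_sqrt (by norm_num)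
  set A : ℝ := goldenRatio ^ t with hA
  set B : ℝ := goldenConj ^ t with hB
  have hAB : A * B = (-1 : ℝ) ^ t := by
    rw [hA, hB, ← mul_pow, goldenRatio_mul_goldenConj]
  have hfib3 : (Nat.fib (t + 3) : ℝ) = (A * goldenRatio ^ 3 - B * goldenConj ^ 3) / Real.sqrt 5 := by
    rw [Real.coe_fib_eq, pow_add, pow_add]
  have hfib2 : (Nat.fib (t + 2) : ℝ) = (A * goldenRatio ^ 2 - B * goldenConj ^ 2) / Real.sqrt 5 := by
    rw [Real.coe_fib_eq, pow_add, pow_add]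
  have hprod : (Nat.fib (t + 3) : ℝ) * (Nat.fib (t + 2) : ℝ)
      = (A ^ 2 * goldenRatio ^ 5 + B ^ 2 * goldenConj ^ 5
          - A * B * ((goldenRatio * goldenConj) ^ 2 * (goldenRatio + goldenConj))) / 5 := by
    rw [hfib3, hfib2, div_mul_div_comm, h5]
    ring_nf
  have hsimp : (goldenRatio * goldenConj) ^ 2 * (goldenRatio + goldenConj) = 1 := by
    rw [goldenRatio_mul_goldenConj, goldenRatio_add_goldenConj]; norm_num
  rw [hprod, hsimp, mul_one, hAB]
  -- bound the pieces
  have hBneg : B ^ 2 * goldenConj ^ 5 ≤ 0 := by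
    have h1 : goldenConj ^ 5 = (goldenConj ^ 2) ^ 2 * goldenConj := by ring
    have h2 : goldenConj ^ 5 ≤ 0 := by
      rw [h1]
      exact mul_nonpos_of_nonneg_of_nonpos (by positivity) goldenConj_neg.le
    exact mul_nonpos_of_nonneg_of_nonpos (by positivity) h2
  have hsign : -(-1 : ℝ) ^ t ≤ 1 := by
    rcases Nat.even_or_odd t with he | ho
    · rw [he.neg_one_pow]; norm_num
    · rw [ho.neg_one_pow]; norm_num
  have hA1 : (1 : ℝ) ≤ A ^ 2 := by
    have h0 : (1 : ℝ) ≤ A := one_le_pow₀ one_lt_goldenRatio.le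
    nlinarith
  have htarget : goldenRatio ^ (2 * t + 2) = A ^ 2 * goldenRatio ^ 2 := by
    rw [hA, ← pow_mul, ← pow_add, mul_comm t 2]
  rw [htarget]
  have hgs := goldenRatio_sq
  have hg5 := gold_pow_five
  nlinarith [hA1, hBneg, hsign, hgs, hg5]

theorem stmt_17 (n s : ℕ) (hs : 2 < s)
    (hrep : ∃ a b : ℕ, 1 ≤ a ∧ 1 ≤ b ∧ n = a * Nat.fib (s - 1) + b * Nat.fib (s - 2))
    (hmax : ¬ ∃ a' b' : ℕ, 1 ≤ a' ∧ 1 ≤ b' ∧ n = a' * Nat.fib s + b' * Nat.fib (s - 1)) :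
    (s : ℝ) ≥ (1 / 2) * Real.logb ((1 + Real.sqrt 5) / 2) n + 2 := by
  obtain ⟨t, rfl⟩ : ∃ t, s = t + 3 := ⟨s - 3, by omega⟩
  -- n ≥ 2
  obtain ⟨a, b, ha, hb, hn⟩ := hrep
  have hfib1 : 1 ≤ Nat.fib (t + 3 - 1) := Nat.fib_pos.mpr (by omega)
  have hfib2 : 1 ≤ Nat.fib (t + 3 - 2) := Nat.fib_pos.mpr (by omega)
  have hn2 : 2 ≤ n := by
    rw [hn]; nlinarith
  -- n ≤ fib s * fib (s-1)
  have hco : Nat.Coprime (Nat.fib (t + 3)) (Nat.fib (t + 3 - 1)) := by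
    have := Nat.fib_coprime_fib_succ (t + 2)
    simpa [Nat.coprime_comm] using this
  have hfibs : 1 ≤ Nat.fib (t + 3) := Nat.fib_pos.mpr (by omega)
  have hle : n ≤ Nat.fib (t + 3) * Nat.fib (t + 3 - 1) := by
    by_contra hlt
    push_neg at hlt
    exact hmax (frob_rep _ _ _ hfibs hfib1 hco hlt)
  -- real bound
  have hkey : (n : ℝ) ≤ goldenRatio ^ (2 * t + 2) := by
    calc (n : ℝ) ≤ (Nat.fib (t + 3) * Nat.fib (t + 3 - 1) : ℕ) := by exact_mod_cast hle
      _ = (Nat.fib (t + 3) : ℝ) * (Nat.fib (t + 2) : ℝ) := by push_cast [show t + 3 - 1 = t + 2 from rfl]; ring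
      _ ≤ goldenRatio ^ (2 * t + 2) := fib_prod_le t
  have hgold : ((1 + Real.sqrt 5) / 2 : ℝ) = goldenRatio := rfl
  rw [hgold]
  have hnpos : (0 : ℝ) < n := by exact_mod_cast (by omega : 0 < n)
  have hlogb : Real.logb goldenRatio n ≤ 2 * t + 2 := by
    rw [Real.logb_le_iff_le_rpow one_lt_goldenRatio hnpos]
    calc (n : ℝ) ≤ goldenRatio ^ (2 * t + 2) := hkey
      _ = goldenRatio ^ ((2 * t + 2 : ℕ) : ℝ) := by rw [Real.rpow_natCast]
      _ ≤ goldenRatio ^ ((2 * t + 2 : ℝ)) := by norm_num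
  push_cast
  linarith
end

section
/- Let p ≥ 1 be an integer, γ, λ the roots of x² = αx + β, and let d be the smallest integer such that δ := β·γ^{−1}·p − γ·d ≤ α. If 1 ≤ p ≤ ⌈γ²⌉ − 2, then 0 ≤ d ≤ β − 1 and α − γ < δ ≤ α. -/
theorem stmt_18 (α β : ℕ) (hα : 1 ≤ α) (hβ : 1 ≤ β) (hco : Nat.Coprime α β)
    (γ : ℝ) (hγ : γ = (α + Real.sqrt (α ^ 2 + 4 * β)) / 2)
    (p : ℕ) (hp1 : 1 ≤ p) (hp2 : (p : ℤ) ≤ ⌈γ ^ 2⌉ - 2)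
    (d : ℤ) (hd : (β : ℝ) * γ⁻¹ * p - γ * d ≤ α)
    (hdmin : ∀ d' : ℤ, (β : ℝ) * γ⁻¹ * p - γ * d' ≤ α → d ≤ d') :
    0 ≤ d ∧ d ≤ (β : ℤ) - 1 ∧
      (α : ℝ) - γ < (β : ℝ) * γ⁻¹ * p - γ * d ∧ (β : ℝ) * γ⁻¹ * p - γ * d ≤ α := by
  have hα1 : (1:ℝ) ≤ (α:ℝ) := by exact_mod_cast hα
  have hβ1 : (1:ℝ) ≤ (β:ℝ) := by exact_mod_cast hβ
  have hp1' : (1:ℝ) ≤ (p:ℝ) := by exact_mod_cast hp1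
  have h4β : (0:ℝ) ≤ (α:ℝ)^2 + 4*(β:ℝ) := by positivity
  have hs : Real.sqrt ((α:ℝ)^2 + 4*(β:ℝ)) ^ 2 = (α:ℝ)^2 + 4*(β:ℝ) := Real.sq_sqrt h4β
  have hsgt : (α:ℝ) < Real.sqrt ((α:ℝ)^2 + 4*(β:ℝ)) := by
    rw [show ((α:ℝ)^2 + 4*(β:ℝ)) = (α:ℝ)^2 + 4*(β:ℝ) from rfl]
    exact (Real.lt_sqrt (by positivity)).mpr (by nlinarith)
  have hγ' : γ = ((α:ℝ) + Real.sqrt ((α:ℝ)^2 + 4*(β:ℝ))) / 2 := by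
    rw [hγ]
  have hγα : (α:ℝ) < γ := by rw [hγ']; linarith
  have hγpos : (0:ℝ) < γ := by linarith
  have hγsq : γ^2 = (α:ℝ)*γ + (β:ℝ) := by
    rw [hγ']; nlinarith [hs]
  have hβinv : (β:ℝ) * γ⁻¹ = γ - (α:ℝ) := by
    have hne : γ ≠ 0 := ne_of_gt hγpos
    field_simp
    nlinarith [hγsq]
  have hγ3 : γ^3 = (α:ℝ)*γ^2 + (β:ℝ)*γ := by linear_combination γ * hγsq
  have hp2' : (p:ℝ) < γ^2 - 1 := by
    have h1 : ((⌈γ^2⌉:ℤ):ℝ) < γ^2 + 1 := Int.ceil_lt_add_one _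
    have h2 : (p:ℝ) ≤ ((⌈γ^2⌉:ℤ):ℝ) - 2 := by exact_mod_cast hp2
    linarith
  have hd0 : 0 ≤ d := by
    by_contra h
    push_neg at h
    have hdle : (d:ℝ) ≤ -1 := by exact_mod_cast (show d ≤ -1 by omega)
    rw [hβinv] at hd
    nlinarith [mul_nonneg (by linarith : (0:ℝ) ≤ γ - α) (by linarith : (0:ℝ) ≤ (p:ℝ) - 1),
      mul_nonneg (le_of_lt hγpos) (by linarith : (0:ℝ) ≤ -1 - (d:ℝ))]
  have hdβ : d ≤ (β:ℤ) - 1 := by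
    apply hdmin
    push_cast
    rw [hβinv]
    nlinarith [mul_le_mul_of_nonneg_left hp2'.le (by linarith : (0:ℝ) ≤ γ - α), hγ3]
  have hlt : (α:ℝ) - γ < (β:ℝ)*γ⁻¹*(p:ℝ) - γ*(d:ℝ) := by
    by_contra h
    push_neg at h
    have hkey : (β:ℝ) * γ⁻¹ * (p:ℝ) - γ * ((d - 1 : ℤ) : ℝ) ≤ (α:ℝ) := by
      push_cast
      have : γ * ((d:ℝ) - 1) = γ * (d:ℝ) - γ := by ring
      rw [this]; linarith
    have := hdmin (d - 1) hkey
    omega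
  exact ⟨hd0, hdβ, hlt, hd⟩
end
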